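/- arXiv:2304.11338 — 5 statements merged into one kernel-verified Lean document; each statement's English description precedes it below -/
import Mathlib

section
/- Let the kinetic energy be T(u) = ½∑_{i=1}^n M_i u_i² with constants M_i > 0, let U : ℝⁿ × ℝ → ℝ be C² and L(q,u,t) = T(u) + U(q,t). Let q : ℝ → ℝⁿ be a C² curve satisfying the constraints and satisfying, for every r = 1,…,m, the reduced equations M_r q̈_r + ∑_{ν=1}^k M_{m+ν} (∂α_ν/∂v_r)(q,v,t) · d/dt[α_ν(q(t),v(t),t)] = (∂U/∂q_r)(q,t) + ∑_{ν=1}^k (∂α_ν/∂v_r)(q,v,t)·(∂U/∂q_{m+ν})(q,t). Then at every time t: d/dt[½∑_{r=1}^m M_r q̇_r² − U(q(t),t)] + ∑_{ν=1}^k M_{m+ν} ᾱ_ν(q,v,t)· d/dt[α_ν(q(t),v(t),t)] = ∑_{ν=1}^k (ᾱ_ν − α_ν)(q,v,t)·(∂U/∂q_{m+ν})(q(t),t) − (∂U/∂t)(q(t),t). -/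
open scoped BigOperators
noncomputable section
namespace NH

/-- The phase point `(q, v, t)` with `q : ℝⁿ` (n = m+k) and independent velocities `v : ℝᵐ`. -/
abbrev Pt (m k : ℕ) : Type := (Fin (m+k) → ℝ) × (Fin m → ℝ) × ℝ

/-- The full phase point `(q, u, t)` with all velocities `u : ℝⁿ`. -/
abbrev PtL (m k : ℕ) : Type := (Fin (m+k) → ℝ) × (Fin (m+k) → ℝ) × ℝ

/-- Partial derivative of `f (q, w, t)` with respect to `q_i`. -/
def pq {n m' : ℕ} (f : (Fin n → ℝ) × (Fin m' → ℝ) × ℝ → ℝ) (i : Fin n)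
    (x : (Fin n → ℝ) × (Fin m' → ℝ) × ℝ) : ℝ :=
  fderiv ℝ f x (Pi.single i 1, 0, 0)

/-- Partial derivative of `f (q, w, t)` with respect to the velocity variable `w_j`. -/
def pv {n m' : ℕ} (f : (Fin n → ℝ) × (Fin m' → ℝ) × ℝ → ℝ) (j : Fin m')
    (x : (Fin n → ℝ) × (Fin m' → ℝ) × ℝ) : ℝ :=
  fderiv ℝ f x (0, Pi.single j 1, 0)

/-- Partial derivative of `f (q, w, t)` with respect to time `t`. -/
def pt {n m' : ℕ} (f : (Fin n → ℝ) × (Fin m' → ℝ) × ℝ → ℝ)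
    (x : (Fin n → ℝ) × (Fin m' → ℝ) × ℝ) : ℝ :=
  fderiv ℝ f x (0, 0, 1)

/-- Partial derivative of `U (q, t)` with respect to `q_i`. -/
def pUq {n : ℕ} (U : (Fin n → ℝ) × ℝ → ℝ) (i : Fin n) (x : (Fin n → ℝ) × ℝ) : ℝ :=
  fderiv ℝ U x (Pi.single i 1, 0)

/-- Partial derivative of `U (q, t)` with respect to `t`. -/
def pUt {n : ℕ} (U : (Fin n → ℝ) × ℝ → ℝ) (x : (Fin n → ℝ) × ℝ) : ℝ :=
  fderiv ℝ U x (0, 1)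

variable {m k : ℕ}

/-- `û(q,v,t) = (v₁,…,vₘ, α₁(q,v,t),…,α_k(q,v,t))`. -/
def uhat (α : Fin k → Pt m k → ℝ) (x : Pt m k) : Fin (m+k) → ℝ :=
  Fin.append x.2.1 (fun ν => α ν x)

/-- The full phase point `(q, û(q,v,t), t)` associated to `(q,v,t)`. -/
def Lpt (α : Fin k → Pt m k → ℝ) (x : Pt m k) : PtL m k :=
  (x.1, uhat α x, x.2.2)

/-- The restricted Lagrangian `L*(q,v,t) = L(q, û(q,v,t), t)`. -/
def Lstar (L : PtL m k → ℝ) (α : Fin k → Pt m k → ℝ) (x : Pt m k) : ℝ :=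
  L (Lpt α x)

/-- `ᾱ_ν(q,v,t) = ∑_r v_r ∂α_ν/∂v_r`. -/
def abar (α : Fin k → Pt m k → ℝ) (ν : Fin k) (x : Pt m k) : ℝ :=
  ∑ r : Fin m, x.2.1 r * pv (α ν) r x

/-- The restricted energy `E*(q,v,t) = ∑_r v_r ∂L*/∂v_r − L*`. -/
def Estar (L : PtL m k → ℝ) (α : Fin k → Pt m k → ℝ) (x : Pt m k) : ℝ :=
  ∑ r : Fin m, x.2.1 r * pv (Lstar L α) r x - Lstar L α x

/-- The energy `E(q,v,t) = ∑_i û_i (∂L/∂u_i)(q,û,t) − L*(q,v,t)`. -/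
def En (L : PtL m k → ℝ) (α : Fin k → Pt m k → ℝ) (x : Pt m k) : ℝ :=
  ∑ i : Fin (m+k), uhat α x i * pv L i (Lpt α x) - Lstar L α x

/-- `q̇_i(t)`. -/
def qdot {n : ℕ} (q : ℝ → Fin n → ℝ) (t : ℝ) (i : Fin n) : ℝ :=
  deriv (fun s => q s i) t

/-- The independent velocities `v(t) = (q̇₁,…,q̇ₘ)` along a curve. -/
def vel (m k : ℕ) (q : ℝ → Fin (m+k) → ℝ) (t : ℝ) (r : Fin m) : ℝ :=
  qdot q t (Fin.castAdd k r)

/-- The point `(q(t), v(t), t)` along a curve. -/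
def along (m k : ℕ) (q : ℝ → Fin (m+k) → ℝ) (t : ℝ) : Pt m k :=
  (q t, vel m k q t, t)

/-- The curve satisfies the nonholonomic constraints: `q̇_{m+ν} = α_ν(q, v, t)`. -/
def Constrained (α : Fin k → Pt m k → ℝ) (q : ℝ → Fin (m+k) → ℝ) : Prop :=
  ∀ (t : ℝ) (ν : Fin k), qdot q t (Fin.natAdd m ν) = α ν (along m k q t)

/-- The Voronec coefficients `B_rν(t)` along a constrained curve. -/
def Bco (α : Fin k → Pt m k → ℝ) (q : ℝ → Fin (m+k) → ℝ) (r : Fin m) (ν : Fin k) (t : ℝ) : ℝ :=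
  deriv (fun s => pv (α ν) r (along m k q s)) t
    - pq (α ν) (Fin.castAdd k r) (along m k q t)
    - ∑ μ : Fin k, pv (α μ) r (along m k q t) * pq (α ν) (Fin.natAdd m μ) (along m k q t)

/-- The Voronec equations of motion along a constrained curve. -/
def Voronec (L : PtL m k → ℝ) (α : Fin k → Pt m k → ℝ) (q : ℝ → Fin (m+k) → ℝ) : Prop :=
  ∀ (r : Fin m) (t : ℝ),
    deriv (fun s => pv (Lstar L α) r (along m k q s)) t
      - pq (Lstar L α) (Fin.castAdd k r) (along m k q t)
      - ∑ ν : Fin k, pq (Lstar L α) (Fin.natAdd m ν) (along m k q t) * pv (α ν) r (along m k q t)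
      - ∑ ν : Fin k, Bco α q r ν t * pv L (Fin.natAdd m ν) (Lpt α (along m k q t)) = 0

lemma clm_pair_decomp {n : ℕ} (L : ((Fin n → ℝ) × ℝ) →L[ℝ] ℝ) (w : Fin n → ℝ) (c : ℝ) :
    L (w, c) = ∑ i : Fin n, w i * L (Pi.single i 1, 0) + c * L (0, 1) := by
  have hw : (w, c) = (∑ i : Fin n, w i • ((Pi.single i 1 : Fin n → ℝ), (0:ℝ)))
      + c • ((0 : Fin n → ℝ), (1:ℝ)) := by
    refine Prod.ext ?_ ?_
    · simp [Prod.fst_sum, ← Pi.single_smul, Finset.univ_sum_single]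
    · simp [Prod.snd_sum]
  rw [hw, map_add, map_sum, map_smul]
  simp only [smul_eq_mul]
  refine congrArg₂ (· + ·) (Finset.sum_congr rfl fun i _ => ?_) rfl
  rw [map_smul, smul_eq_mul]

theorem pointmass_energy_balance (m k : ℕ) (hm : 0 < m) (hk : 0 < k)
    (M : Fin (m+k) → ℝ) (hM : ∀ i, 0 < M i)
    (U : (Fin (m+k) → ℝ) × ℝ → ℝ) (hU : ContDiff ℝ 2 U)
    (α : Fin k → Pt m k → ℝ) (hα : ∀ ν, ContDiff ℝ 2 (α ν))
    (q : ℝ → Fin (m+k) → ℝ) (hq : ContDiff ℝ 2 q)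
    (hcon : Constrained α q)
    (hred : ∀ (r : Fin m) (t : ℝ),
      M (Fin.castAdd k r) * deriv (fun s => qdot q s (Fin.castAdd k r)) t
        + ∑ ν : Fin k, M (Fin.natAdd m ν) * pv (α ν) r (along m k q t)
            * deriv (fun s => α ν (along m k q s)) t
      = pUq U (Fin.castAdd k r) (q t, t)
        + ∑ ν : Fin k, pv (α ν) r (along m k q t) * pUq U (Fin.natAdd m ν) (q t, t)) :
    ∀ t : ℝ,
      deriv (fun s =>
          (1/2) * ∑ r : Fin m, M (Fin.castAdd k r) * (vel m k q s r) ^ 2 - U (q s, s)) t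
        + ∑ ν : Fin k, M (Fin.natAdd m ν) * abar α ν (along m k q t)
            * deriv (fun s => α ν (along m k q s)) t
      = ∑ ν : Fin k,
          (abar α ν (along m k q t) - α ν (along m k q t)) * pUq U (Fin.natAdd m ν) (q t, t)
        - pUt U (q t, t) := by
  intro t
  -- coordinate functions are C²
  have hqi : ∀ i, ContDiff ℝ 2 (fun s => q s i) := fun i => contDiff_pi.mp hq i
  have hqd : ∀ i, HasDerivAt (fun s => q s i) (qdot q t i) t := fun i =>
    (((hqi i).differentiable two_ne_zero) t).hasDerivAt
  have hqd1 : ∀ i, ContDiff ℝ 1 (deriv (fun s => q s i)) := by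
    intro i
    have h2 : ContDiff ℝ ((1:ℕ) + 1) (fun s => q s i) := by
      exact_mod_cast hqi i
    exact (contDiff_succ_iff_deriv.mp h2).2.2
  have hvel : ∀ r : Fin m, HasDerivAt (fun s => vel m k q s r)
      (deriv (fun s => qdot q s (Fin.castAdd k r)) t) t := by
    intro r
    exact (((hqd1 (Fin.castAdd k r)).differentiable one_ne_zero) t).hasDerivAt
  -- derivative of U along the curve
  have hUg : HasDerivAt (fun s => U (q s, s))
      (fderiv ℝ U (q t, t) (qdot q t, 1)) t := by
    have hg : HasDerivAt (fun s => ((q s, s) : (Fin (m+k) → ℝ) × ℝ))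
        ((qdot q t, 1) : (Fin (m+k) → ℝ) × ℝ) t :=
      (hasDerivAt_pi.mpr hqd : HasDerivAt q (qdot q t) t).prodMk (hasDerivAt_id t)
    exact HasFDerivAt.comp_hasDerivAt (l := U) (f := fun s => ((q s, s) : (Fin (m+k) → ℝ) × ℝ))
      t ((hU.differentiable two_ne_zero (q t, t)).hasFDerivAt) hg
  -- derivative of kinetic part
  have hK : HasDerivAt (fun s => (1/2) * ∑ r : Fin m, M (Fin.castAdd k r) * (vel m k q s r) ^ 2)
      ((1/2) * ∑ r : Fin m, M (Fin.castAdd k r) *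
        ((2:ℕ) * (vel m k q t r) ^ 1 * deriv (fun s => qdot q s (Fin.castAdd k r)) t)) t := by
    exact ((HasDerivAt.fun_sum fun r _ => ((hvel r).pow 2).const_mul (M (Fin.castAdd k r))).const_mul
      (1/2))
  have hD := hK.fun_sub hUg
  rw [hD.deriv]
  -- decompose the fderiv of U
  have hdec : fderiv ℝ U (q t, t) (qdot q t, 1)
      = ∑ i : Fin (m+k), qdot q t i * pUq U i (q t, t) + pUt U (q t, t) := by
    rw [clm_pair_decomp]
    simp [pUq, pUt]
  rw [hdec, Fin.sum_univ_add]
  -- use the constraints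
  have hcon' : ∀ ν : Fin k, qdot q t (Fin.natAdd m ν) = α ν (along m k q t) := hcon t
  simp only [hcon']
  -- the summed reduced equations
  have key : ∑ r : Fin m, vel m k q t r * (M (Fin.castAdd k r)
        * deriv (fun s => qdot q s (Fin.castAdd k r)) t
        + ∑ ν : Fin k, M (Fin.natAdd m ν) * pv (α ν) r (along m k q t)
            * deriv (fun s => α ν (along m k q s)) t)
      = ∑ r : Fin m, vel m k q t r * (pUq U (Fin.castAdd k r) (q t, t)
        + ∑ ν : Fin k, pv (α ν) r (along m k q t) * pUq U (Fin.natAdd m ν) (q t, t)) :=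
    Finset.sum_congr rfl fun r _ => by rw [hred r t]
  have hv : ∀ r : Fin m, qdot q t (Fin.castAdd k r) = vel m k q t r := fun r => rfl
  simp only [hv]
  simp only [mul_add, Finset.mul_sum, Finset.sum_add_distrib] at key
  have sc1 : (∑ x : Fin m, ∑ i : Fin k, vel m k q t x * (M (Fin.natAdd m i) * pv (α i) x
        (along m k q t) * deriv (fun s => α i (along m k q s)) t))
      = ∑ i : Fin k, ∑ x : Fin m, vel m k q t x * (M (Fin.natAdd m i) * pv (α i) x
        (along m k q t) * deriv (fun s => α i (along m k q s)) t) := Finset.sum_comm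
  have sc2 : (∑ x : Fin m, ∑ i : Fin k, vel m k q t x * (pv (α i) x (along m k q t)
        * pUq U (Fin.natAdd m i) (q t, t)))
      = ∑ i : Fin k, ∑ x : Fin m, vel m k q t x * (pv (α i) x (along m k q t)
        * pUq U (Fin.natAdd m i) (q t, t)) := Finset.sum_comm
  rw [sc1, sc2] at key
  have h21 : (along m k q t).2.1 = vel m k q t := rfl
  simp only [abar, h21, sub_mul, Finset.sum_sub_distrib, Finset.sum_mul, Finset.mul_sum]
  ring_nf
  have e1 : (∑ x : Fin m, vel m k q t x * (M (Fin.castAdd k x)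
        * deriv (fun s => qdot q s (Fin.castAdd k x)) t))
      = ∑ x : Fin m, M (Fin.castAdd k x) * vel m k q t x
        * deriv (fun s => qdot q s (Fin.castAdd k x)) t :=
    Finset.sum_congr rfl fun x _ => by ring
  have e2 : (∑ x : Fin k, ∑ y : Fin m, vel m k q t y * (M (Fin.natAdd m x) * pv (α x) y
        (along m k q t) * deriv (fun s => α x (along m k q s)) t))
      = ∑ x : Fin k, ∑ y : Fin m, M (Fin.natAdd m x) * vel m k q t y * pv (α x) y
        (along m k q t) * deriv (fun s => α x (along m k q s)) t :=
    Finset.sum_congr rfl fun x _ => Finset.sum_congr rfl fun y _ => by ring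
  have e3 : (∑ x : Fin k, ∑ y : Fin m, vel m k q t y * (pv (α x) y (along m k q t)
        * pUq U (Fin.natAdd m x) (q t, t)))
      = ∑ x : Fin k, ∑ y : Fin m, vel m k q t y * pv (α x) y (along m k q t)
        * pUq U (Fin.natAdd m x) (q t, t) :=
    Finset.sum_congr rfl fun x _ => Finset.sum_congr rfl fun y _ => by ring
  rw [e1, e2, e3] at key
  linarith [key]


end NH
end
end

section
/- Let the kinetic energy be T(u) = ½∑_{i=1}^n M_i u_i² with constants M_i > 0, let F_i : ℝⁿ × ℝ → ℝ (i = 1,…,n) be the generalized force components, and set T*(q,v,t) = ½∑_{r=1}^m M_r v_r² + ½∑_{ν=1}^k M_{m+ν} α_ν(q,v,t)². A C² curve q : ℝ → ℝⁿ satisfying the constraints solves the Voronec equations with forces (i.e., for each r = 1,…,m: d/dt[∂T*/∂v_r] − ∂T*/∂q_r − ∑_{ν=1}^k (∂T*/∂q_{m+ν})(∂α_ν/∂v_r) − ∑_{ν=1}^k B_rν (∂T/∂u_{m+ν})(û) = F_r + ∑_{ν=1}^k (∂α_ν/∂v_r) F_{m+ν} along the curve) if and only if for each r = 1,…,m and all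 t: M_r q̈_r + ∑_{ν=1}^k M_{m+ν} (∂α_ν/∂v_r)(q,v,t)·d/dt[α_ν(q(t),v(t),t)] = F_r(q,t) + ∑_{ν=1}^k (∂α_ν/∂v_r)(q,v,t)·F_{m+ν}(q,t). -/
open scoped BigOperators
noncomputable section
namespace NH

variable {m k : ℕ}

-- coordinate CLM for the velocity slot
def Cv {n m' : ℕ} (j : Fin m') : ((Fin n → ℝ) × (Fin m' → ℝ) × ℝ) →L[ℝ] ℝ :=
  (ContinuousLinearMap.proj j).comp ((ContinuousLinearMap.fst ℝ (Fin m' → ℝ) ℝ).comp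
    (ContinuousLinearMap.snd ℝ (Fin n → ℝ) ((Fin m' → ℝ) × ℝ)))

lemma Cv_apply {n m' : ℕ} (j : Fin m') (w : (Fin n → ℝ) × (Fin m' → ℝ) × ℝ) :
    Cv j w = w.2.1 j := rfl

lemma hasFDerivAt_coordv {n m' : ℕ} (j : Fin m') (x : (Fin n → ℝ) × (Fin m' → ℝ) × ℝ) :
    HasFDerivAt (fun y : (Fin n → ℝ) × (Fin m' → ℝ) × ℝ => y.2.1 j) (Cv j) x :=
  (Cv j).hasFDerivAt

lemma pv_quad {n m' : ℕ} (M : Fin m' → ℝ) (j : Fin m')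
    (x : (Fin n → ℝ) × (Fin m' → ℝ) × ℝ) :
    pv (fun y => (1/2) * ∑ i : Fin m', M i * (y.2.1 i)^2) j x = M j * x.2.1 j := by
  have h2 : ∀ i : Fin m', HasFDerivAt
      (fun y : (Fin n → ℝ) × (Fin m' → ℝ) × ℝ => M i * (y.2.1 i)^2)
      (M i • (x.2.1 i • Cv i + x.2.1 i • Cv i)) x := by
    intro i
    have hc := hasFDerivAt_coordv (n := n) i x
    have := (hc.mul hc).const_mul (M i)
    simpa [pow_two] using this
  have hsum := HasFDerivAt.fun_sum (fun i (_ : i ∈ Finset.univ) => h2 i)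
  have hfin := hsum.const_mul (1/2 : ℝ)
  rw [pv, hfin.fderiv]
  simp only [ContinuousLinearMap.smul_apply, ContinuousLinearMap.sum_apply,
    ContinuousLinearMap.add_apply, Cv_apply, smul_eq_mul]
  rw [Finset.sum_eq_single j]
  · simp [Pi.single_eq_same]; ring
  · intro i _ hij
    simp [Pi.single_eq_of_ne hij]
  · simp

lemma hasFDerivAt_TstFun (M : Fin (m+k) → ℝ) (α : Fin k → Pt m k → ℝ)
    (hα : ∀ ν, ContDiff ℝ 2 (α ν)) (x : Pt m k) :
    HasFDerivAt
      (fun y : Pt m k => (1/2) * ∑ r : Fin m, M (Fin.castAdd k r) * (y.2.1 r) ^ 2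
        + (1/2) * ∑ ν : Fin k, M (Fin.natAdd m ν) * (α ν y) ^ 2)
      ((1/2 : ℝ) • ∑ r : Fin m, M (Fin.castAdd k r) • (x.2.1 r • Cv r + x.2.1 r • Cv r)
        + (1/2 : ℝ) • ∑ ν : Fin k, M (Fin.natAdd m ν) •
            (α ν x • fderiv ℝ (α ν) x + α ν x • fderiv ℝ (α ν) x)) x := by
  have h1 : ∀ r : Fin m, HasFDerivAt
      (fun y : Pt m k => M (Fin.castAdd k r) * (y.2.1 r)^2)
      (M (Fin.castAdd k r) • (x.2.1 r • Cv r + x.2.1 r • Cv r)) x := by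
    intro r
    have hc := hasFDerivAt_coordv (n := m+k) r x
    have := (hc.mul hc).const_mul (M (Fin.castAdd k r))
    simpa [pow_two] using this
  have h2 : ∀ ν : Fin k, HasFDerivAt
      (fun y : Pt m k => M (Fin.natAdd m ν) * (α ν y)^2)
      (M (Fin.natAdd m ν) • (α ν x • fderiv ℝ (α ν) x + α ν x • fderiv ℝ (α ν) x)) x := by
    intro ν
    have hd : HasFDerivAt (α ν) (fderiv ℝ (α ν) x) x :=
      (((hα ν).differentiable (by norm_num)) x).hasFDerivAt
    have := (hd.mul hd).const_mul (M (Fin.natAdd m ν))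
    simpa [pow_two] using this
  exact ((HasFDerivAt.fun_sum (fun r (_ : r ∈ Finset.univ) => h1 r)).const_mul (1/2:ℝ)).add
    ((HasFDerivAt.fun_sum (fun ν (_ : ν ∈ Finset.univ) => h2 ν)).const_mul (1/2:ℝ))

lemma pv_TstFun (M : Fin (m+k) → ℝ) (α : Fin k → Pt m k → ℝ)
    (hα : ∀ ν, ContDiff ℝ 2 (α ν)) (r : Fin m) (x : Pt m k) :
    pv (fun y : Pt m k => (1/2) * ∑ r : Fin m, M (Fin.castAdd k r) * (y.2.1 r) ^ 2
        + (1/2) * ∑ ν : Fin k, M (Fin.natAdd m ν) * (α ν y) ^ 2) r x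
    = M (Fin.castAdd k r) * x.2.1 r
      + ∑ ν : Fin k, M (Fin.natAdd m ν) * (α ν x * pv (α ν) r x) := by
  rw [pv, (hasFDerivAt_TstFun M α hα x).fderiv]
  simp only [ContinuousLinearMap.add_apply, ContinuousLinearMap.smul_apply,
    ContinuousLinearMap.sum_apply, Cv_apply, smul_eq_mul]
  congr 1
  · rw [Finset.sum_eq_single r]
    · simp [Pi.single_eq_same]; ring
    · intro i _ hij
      simp [Pi.single_eq_of_ne hij]
    · simp
  · rw [Finset.mul_sum]
    apply Finset.sum_congr rfl
    intro ν _
    rw [pv]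
    ring

lemma pq_TstFun (M : Fin (m+k) → ℝ) (α : Fin k → Pt m k → ℝ)
    (hα : ∀ ν, ContDiff ℝ 2 (α ν)) (i : Fin (m+k)) (x : Pt m k) :
    pq (fun y : Pt m k => (1/2) * ∑ r : Fin m, M (Fin.castAdd k r) * (y.2.1 r) ^ 2
        + (1/2) * ∑ ν : Fin k, M (Fin.natAdd m ν) * (α ν y) ^ 2) i x
    = ∑ ν : Fin k, M (Fin.natAdd m ν) * (α ν x * pq (α ν) i x) := by
  rw [pq, (hasFDerivAt_TstFun M α hα x).fderiv]
  simp only [ContinuousLinearMap.add_apply, ContinuousLinearMap.smul_apply,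
    ContinuousLinearMap.sum_apply, Cv_apply, smul_eq_mul]
  simp only [Pi.zero_apply, mul_zero, add_zero, Finset.sum_const_zero, mul_zero, zero_add]
  rw [Finset.mul_sum]
  apply Finset.sum_congr rfl
  intro ν _
  rw [pq]
  ring

-- smoothness along the curve
lemma contDiff_qdot {n : ℕ} (q : ℝ → Fin n → ℝ) (hq : ContDiff ℝ 2 q) (i : Fin n) :
    ContDiff ℝ 1 (fun s => qdot q s i) := by
  have h2 : ContDiff ℝ 2 (fun s => q s i) :=
    (ContinuousLinearMap.proj (R := ℝ) (φ := fun _ : Fin n => ℝ) i).contDiff.comp hq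
  have h2' : ContDiff ℝ ((1:WithTop ℕ∞) + 1) (fun s => q s i) := by
    rw [one_add_one_eq_two]; exact h2
  exact (contDiff_succ_iff_deriv.mp h2').2.2

lemma contDiff_along (q : ℝ → Fin (m+k) → ℝ) (hq : ContDiff ℝ 2 q) :
    ContDiff ℝ 1 (along m k q) := by
  refine ContDiff.prodMk (hq.of_le one_le_two) (ContDiff.prodMk ?_ contDiff_id)
  exact contDiff_pi.2 fun r => contDiff_qdot q hq (Fin.castAdd k r)

lemma diffAt_alpha_along (q : ℝ → Fin (m+k) → ℝ) (hq : ContDiff ℝ 2 q)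
    (α : Fin k → Pt m k → ℝ) (hα : ∀ ν, ContDiff ℝ 2 (α ν)) (ν : Fin k) (t : ℝ) :
    DifferentiableAt ℝ (fun s => α ν (along m k q s)) t :=
  ((((hα ν).of_le one_le_two).comp (contDiff_along q hq)).differentiable one_ne_zero) t

lemma diffAt_pv_along (q : ℝ → Fin (m+k) → ℝ) (hq : ContDiff ℝ 2 q)
    (α : Fin k → Pt m k → ℝ) (hα : ∀ ν, ContDiff ℝ 2 (α ν)) (ν : Fin k) (r : Fin m) (t : ℝ) :
    DifferentiableAt ℝ (fun s => pv (α ν) r (along m k q s)) t := by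
  have hfd : ContDiff ℝ 1 (fderiv ℝ (α ν)) :=
    (hα ν).fderiv_right (by norm_num)
  have h1 : ContDiff ℝ 1 (fun y : Pt m k => fderiv ℝ (α ν) y ((0, Pi.single r 1, 0) : Pt m k)) :=
    hfd.clm_apply contDiff_const
  exact ((h1.comp (contDiff_along q hq)).differentiable one_ne_zero) t

lemma key_identity (M : Fin (m+k) → ℝ) (α : Fin k → Pt m k → ℝ)
    (hα : ∀ ν, ContDiff ℝ 2 (α ν)) (q : ℝ → Fin (m+k) → ℝ) (hq : ContDiff ℝ 2 q)
    (r : Fin m) (t : ℝ) :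
    deriv (fun s => pv (fun y : Pt m k =>
          (1/2) * ∑ r : Fin m, M (Fin.castAdd k r) * (y.2.1 r) ^ 2
            + (1/2) * ∑ ν : Fin k, M (Fin.natAdd m ν) * (α ν y) ^ 2) r (along m k q s)) t
      - pq (fun y : Pt m k =>
          (1/2) * ∑ r : Fin m, M (Fin.castAdd k r) * (y.2.1 r) ^ 2
            + (1/2) * ∑ ν : Fin k, M (Fin.natAdd m ν) * (α ν y) ^ 2) (Fin.castAdd k r)
          (along m k q t)
      - ∑ ν : Fin k, pq (fun y : Pt m k =>
          (1/2) * ∑ r : Fin m, M (Fin.castAdd k r) * (y.2.1 r) ^ 2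
            + (1/2) * ∑ ν : Fin k, M (Fin.natAdd m ν) * (α ν y) ^ 2) (Fin.natAdd m ν)
          (along m k q t) * pv (α ν) r (along m k q t)
      - ∑ ν : Fin k, Bco α q r ν t * pv (fun x : PtL m k =>
          (1/2) * ∑ i : Fin (m+k), M i * (x.2.1 i) ^ 2) (Fin.natAdd m ν)
          (Lpt α (along m k q t))
    = M (Fin.castAdd k r) * deriv (fun s => qdot q s (Fin.castAdd k r)) t
      + ∑ ν : Fin k, M (Fin.natAdd m ν) * pv (α ν) r (along m k q t)
          * deriv (fun s => α ν (along m k q s)) t := by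
  classical
  set a := along m k q with ha
  -- abbreviations
  set c : Fin k → ℝ := fun ν => M (Fin.natAdd m ν) with hc
  set A : Fin k → ℝ := fun ν => α ν (a t) with hA
  set P : Fin k → ℝ := fun ν => pv (α ν) r (a t) with hP
  set A' : Fin k → ℝ := fun ν => deriv (fun s => α ν (a s)) t with hA'
  set P' : Fin k → ℝ := fun ν => deriv (fun s => pv (α ν) r (a s)) t with hP'
  set Qc : Fin k → ℝ := fun ν => pq (α ν) (Fin.castAdd k r) (a t) with hQc
  set Q : Fin k → Fin k → ℝ := fun ν μ => pq (α ν) (Fin.natAdd m μ) (a t) with hQ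
  -- Step 1: the time derivative of pv Tst r along the curve
  have hfun : (fun s => pv (fun y : Pt m k =>
          (1/2) * ∑ r : Fin m, M (Fin.castAdd k r) * (y.2.1 r) ^ 2
            + (1/2) * ∑ ν : Fin k, M (Fin.natAdd m ν) * (α ν y) ^ 2) r (a s))
      = fun s => M (Fin.castAdd k r) * qdot q s (Fin.castAdd k r)
          + ∑ ν : Fin k, c ν * (α ν (a s) * pv (α ν) r (a s)) := by
    funext s
    rw [pv_TstFun M α hα]
    rfl
  have hdqdot : DifferentiableAt ℝ (fun s => qdot q s (Fin.castAdd k r)) t :=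
    ((contDiff_qdot q hq _).differentiable one_ne_zero) t
  have hdA : ∀ ν, DifferentiableAt ℝ (fun s => α ν (a s)) t :=
    fun ν => diffAt_alpha_along q hq α hα ν t
  have hdP : ∀ ν, DifferentiableAt ℝ (fun s => pv (α ν) r (a s)) t :=
    fun ν => diffAt_pv_along q hq α hα ν r t
  have hderiv : deriv (fun s => pv (fun y : Pt m k =>
          (1/2) * ∑ r : Fin m, M (Fin.castAdd k r) * (y.2.1 r) ^ 2
            + (1/2) * ∑ ν : Fin k, M (Fin.natAdd m ν) * (α ν y) ^ 2) r (a s)) t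
      = M (Fin.castAdd k r) * deriv (fun s => qdot q s (Fin.castAdd k r)) t
        + ∑ ν : Fin k, c ν * (A' ν * P ν + A ν * P' ν) := by
    rw [hfun]
    rw [deriv_fun_add (hdqdot.const_mul _)
      (DifferentiableAt.fun_sum fun ν _ => ((hdA ν).fun_mul (hdP ν)).const_mul _)]
    rw [deriv_const_mul _ hdqdot,
      deriv_fun_sum fun ν _ => ((hdA ν).fun_mul (hdP ν)).const_mul _]
    congr 1
    apply Finset.sum_congr rfl
    intro ν _
    rw [deriv_const_mul _ ((hdA ν).fun_mul (hdP ν)), deriv_fun_mul (hdA ν) (hdP ν)]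
  rw [hderiv]
  -- Step 2: pq Tst values
  rw [pq_TstFun M α hα]
  have hpq2 : ∀ ν : Fin k, pq (fun y : Pt m k =>
          (1/2) * ∑ r : Fin m, M (Fin.castAdd k r) * (y.2.1 r) ^ 2
            + (1/2) * ∑ ν : Fin k, M (Fin.natAdd m ν) * (α ν y) ^ 2) (Fin.natAdd m ν) (a t)
      = ∑ μ : Fin k, c μ * (A μ * Q μ ν) := fun ν => pq_TstFun M α hα _ _
  simp only [hpq2]
  have hpvT : ∀ ν : Fin k, pv (fun x : PtL m k =>
          (1/2) * ∑ i : Fin (m+k), M i * (x.2.1 i) ^ 2) (Fin.natAdd m ν) (Lpt α (a t))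
      = c ν * A ν := by
    intro ν
    rw [pv_quad]
    congr 1
    show uhat α (a t) (Fin.natAdd m ν) = α ν (a t)
    exact Fin.append_right _ _ ν
  simp only [hpvT]
  have hB : ∀ ν : Fin k, Bco α q r ν t = P' ν - Qc ν - ∑ μ : Fin k, P μ * Q ν μ :=
    fun ν => rfl
  simp only [hB]
  -- Step 3: algebra
  have e1 : ∑ ν : Fin k, c ν * (A' ν * P ν + A ν * P' ν)
      = (∑ ν : Fin k, c ν * P ν * A' ν) + ∑ ν : Fin k, P' ν * (c ν * A ν) := by
    rw [← Finset.sum_add_distrib]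
    exact Finset.sum_congr rfl fun ν _ => by ring
  have e2 : ∑ ν : Fin k, c ν * (A ν * Qc ν) = ∑ ν : Fin k, Qc ν * (c ν * A ν) :=
    Finset.sum_congr rfl fun ν _ => by ring
  have e3 : ∑ ν : Fin k, (∑ μ : Fin k, c μ * (A μ * Q μ ν)) * P ν
      = ∑ ν : Fin k, (∑ μ : Fin k, P μ * Q ν μ) * (c ν * A ν) := by
    simp only [Finset.sum_mul]
    rw [show (∑ ν : Fin k, ∑ μ : Fin k, c μ * (A μ * Q μ ν) * P ν)
        = ∑ ν : Fin k, ∑ μ : Fin k, c ν * (A ν * Q ν μ) * P μ from Finset.sum_comm]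
    exact Finset.sum_congr rfl fun ν _ => Finset.sum_congr rfl fun μ _ => by ring
  have e4 : ∑ ν : Fin k, (P' ν - Qc ν - ∑ μ : Fin k, P μ * Q ν μ) * (c ν * A ν)
      = (∑ ν : Fin k, P' ν * (c ν * A ν)) - (∑ ν : Fin k, Qc ν * (c ν * A ν))
        - ∑ ν : Fin k, (∑ μ : Fin k, P μ * Q ν μ) * (c ν * A ν) := by
    simp only [sub_mul, Finset.sum_sub_distrib]
  rw [e1, e2, e3, e4]
  have e5 : ∑ ν : Fin k, M (Fin.natAdd m ν) * pv (α ν) r (a t) * deriv (fun s => α ν (a s)) t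
      = ∑ ν : Fin k, c ν * P ν * A' ν :=
    Finset.sum_congr rfl fun ν _ => rfl
  rw [e5]
  ring

theorem pointmass_Voronec_iff_reduced (m k : ℕ) (hm : 0 < m) (hk : 0 < k)
    (M : Fin (m+k) → ℝ) (hM : ∀ i, 0 < M i)
    (F : Fin (m+k) → (Fin (m+k) → ℝ) × ℝ → ℝ)
    (T : PtL m k → ℝ)
    (hT : ∀ x : PtL m k, T x = (1/2) * ∑ i : Fin (m+k), M i * (x.2.1 i) ^ 2)
    (α : Fin k → Pt m k → ℝ) (hα : ∀ ν, ContDiff ℝ 2 (α ν))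
    (Tst : Pt m k → ℝ)
    (hTst : ∀ x : Pt m k,
      Tst x = (1/2) * ∑ r : Fin m, M (Fin.castAdd k r) * (x.2.1 r) ^ 2
        + (1/2) * ∑ ν : Fin k, M (Fin.natAdd m ν) * (α ν x) ^ 2)
    (q : ℝ → Fin (m+k) → ℝ) (hq : ContDiff ℝ 2 q)
    (hcon : Constrained α q)
 :
    (∀ (r : Fin m) (t : ℝ),
      deriv (fun s => pv Tst r (along m k q s)) t
        - pq Tst (Fin.castAdd k r) (along m k q t)
        - ∑ ν : Fin k, pq Tst (Fin.natAdd m ν) (along m k q t) * pv (α ν) r (along m k q t)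
        - ∑ ν : Fin k, Bco α q r ν t * pv T (Fin.natAdd m ν) (Lpt α (along m k q t))
      = F (Fin.castAdd k r) (q t, t)
        + ∑ ν : Fin k, pv (α ν) r (along m k q t) * F (Fin.natAdd m ν) (q t, t))
    ↔ (∀ (r : Fin m) (t : ℝ),
      M (Fin.castAdd k r) * deriv (fun s => qdot q s (Fin.castAdd k r)) t
        + ∑ ν : Fin k, M (Fin.natAdd m ν) * pv (α ν) r (along m k q t)
            * deriv (fun s => α ν (along m k q s)) t
      = F (Fin.castAdd k r) (q t, t)
        + ∑ ν : Fin k, pv (α ν) r (along m k q t) * F (Fin.natAdd m ν) (q t, t)) := by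
  have hTf : T = fun x : PtL m k => (1/2) * ∑ i : Fin (m+k), M i * (x.2.1 i) ^ 2 := funext hT
  have hTstf : Tst = fun x : Pt m k =>
      (1/2) * ∑ r : Fin m, M (Fin.castAdd k r) * (x.2.1 r) ^ 2
        + (1/2) * ∑ ν : Fin k, M (Fin.natAdd m ν) * (α ν x) ^ 2 := funext hTst
  subst hTf hTstf
  constructor
  · intro h r t
    rw [← key_identity M α hα q hq r t]
    exact h r t
  · intro h r t
    rw [key_identity M α hα q hq r t]
    exact h r t


end NH
end
end

section
/- Let the kinetic energy be T(u) = ½∑_{i=1}^n M_i u_i² with constants M_i > 0, let U : ℝⁿ × ℝ → ℝ be C², and assume ᾱ_ν(q,v,t) = α_ν(q,v,t) for every ν = 1,…,k and all (q,v,t). Let q : ℝ → ℝⁿ be a C² curve satisfying the constraints and solving, for each r, the reduced equations M_r q̈_r + ∑_{ν=1}^k M_{m+ν} (∂α_ν/∂v_r) d/dt[α_ν(q(t),v(t),t)] = (∂U/∂q_r) + ∑_{ν=1}^k (∂α_ν/∂v_r)(∂U/∂q_{m+ν}). Then with T*(q,v,t) = ½∑_{r=1}^m M_r v_r² + ½∑_{ν=1}^k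 M_{m+ν} α_ν(q,v,t)², one has at every time t: d/dt[T*(q(t),v(t),t) − U(q(t),t)] = −(∂U/∂t)(q(t),t). -/
open scoped BigOperators
noncomputable section
namespace NH

variable {m k : ℕ}

lemma fderiv_pair_expand {n : ℕ} (U : (Fin n → ℝ) × ℝ → ℝ) (x : (Fin n → ℝ) × ℝ)
    (v : Fin n → ℝ) (c : ℝ) :
    fderiv ℝ U x (v, c) = ∑ i, v i * pUq U i x + c * pUt U x := by
  have hv : ((v, c) : (Fin n → ℝ) × ℝ)
      = (∑ i, v i • ((Pi.single i 1 : Fin n → ℝ), (0:ℝ))) + c • ((0 : Fin n → ℝ), (1:ℝ)) := by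
    ext j
    · simp [Finset.sum_apply, Pi.single_apply, Finset.sum_ite_eq', Prod.fst_sum]
    · simp [Prod.snd_sum]
  rw [hv, map_add, map_sum, map_smul]
  simp only [pUq, pUt, smul_eq_mul, one_mul]
  refine congrArg (· + _) (Finset.sum_congr rfl fun i _ => ?_)
  rw [map_smul]; rfl

theorem pointmass_homogeneous_energy_balance (m k : ℕ) (hm : 0 < m) (hk : 0 < k)
    (M : Fin (m+k) → ℝ) (hM : ∀ i, 0 < M i)
    (U : (Fin (m+k) → ℝ) × ℝ → ℝ) (hU : ContDiff ℝ 2 U)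
    (α : Fin k → Pt m k → ℝ) (hα : ∀ ν, ContDiff ℝ 2 (α ν))
    (habar : ∀ (ν : Fin k) (x : Pt m k), abar α ν x = α ν x)
    (q : ℝ → Fin (m+k) → ℝ) (hq : ContDiff ℝ 2 q)
    (hcon : Constrained α q)
    (hred : ∀ (r : Fin m) (t : ℝ),
      M (Fin.castAdd k r) * deriv (fun s => qdot q s (Fin.castAdd k r)) t
        + ∑ ν : Fin k, M (Fin.natAdd m ν) * pv (α ν) r (along m k q t)
            * deriv (fun s => α ν (along m k q s)) t
      = pUq U (Fin.castAdd k r) (q t, t)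
        + ∑ ν : Fin k, pv (α ν) r (along m k q t) * pUq U (Fin.natAdd m ν) (q t, t))
    (Tst : Pt m k → ℝ)
    (hTst : ∀ x : Pt m k,
      Tst x = (1/2) * ∑ r : Fin m, M (Fin.castAdd k r) * (x.2.1 r) ^ 2
        + (1/2) * ∑ ν : Fin k, M (Fin.natAdd m ν) * (α ν x) ^ 2) :
    ∀ t : ℝ,
      deriv (fun s => Tst (along m k q s) - U (q s, s)) t = - pUt U (q t, t) := by
  intro t
  have h2 : ((2:WithTop ℕ∞)) = 1 + 1 := by norm_num
  have hqi : ∀ i, ContDiff ℝ 2 (fun s => q s i) := fun i => contDiff_pi.mp hq i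
  have hqd1 : ∀ i : Fin (m+k), Differentiable ℝ (fun s => qdot q s i) := by
    intro i
    exact ((contDiff_succ_iff_deriv.mp (h2 ▸ hqi i)).2.2).differentiable one_ne_zero
  have hv : ∀ r : Fin m, HasDerivAt (fun s => vel m k q s r)
      (deriv (fun s => qdot q s (Fin.castAdd k r)) t) t :=
    fun r => ((hqd1 (Fin.castAdd k r)) t).hasDerivAt
  have hqdot : HasDerivAt q (qdot q t) t :=
    hasDerivAt_pi.mpr fun i => (((hqi i).differentiable (by norm_num)) t).hasDerivAt
  have hvelpi : HasDerivAt (fun s => vel m k q s)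
      (fun r => deriv (fun s => qdot q s (Fin.castAdd k r)) t) t := hasDerivAt_pi.mpr hv
  have halong : HasDerivAt (fun s => along m k q s)
      ((qdot q t, fun r => deriv (fun s => qdot q s (Fin.castAdd k r)) t, 1) : Pt m k) t :=
    hqdot.prodMk (hvelpi.prodMk (hasDerivAt_id t))
  have hαd : ∀ ν, HasDerivAt (fun s => α ν (along m k q s))
      (deriv (fun s => α ν (along m k q s)) t) t := by
    intro ν
    exact ((((hα ν).differentiable (by norm_num)) _).comp t halong.differentiableAt).hasDerivAt
  have hTfun : (fun s => Tst (along m k q s))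
      = fun s => (1/2) * ∑ r : Fin m, M (Fin.castAdd k r) * (vel m k q s r) ^ 2
        + (1/2) * ∑ ν : Fin k, M (Fin.natAdd m ν) * (α ν (along m k q s)) ^ 2 :=
    funext fun s => hTst (along m k q s)
  have hT : HasDerivAt (fun s => Tst (along m k q s))
      ((1/2) * ∑ r : Fin m, M (Fin.castAdd k r) *
          (((2:ℕ):ℝ) * (vel m k q t r) ^ 1 * deriv (fun s => qdot q s (Fin.castAdd k r)) t)
        + (1/2) * ∑ ν : Fin k, M (Fin.natAdd m ν) *
          (((2:ℕ):ℝ) * (α ν (along m k q t)) ^ 1 * deriv (fun s => α ν (along m k q s)) t)) t := by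
    rw [hTfun]
    exact (HasDerivAt.const_mul _ (HasDerivAt.fun_sum fun r _ => ((hv r).fun_pow 2).const_mul _)).fun_add
      (HasDerivAt.const_mul _ (HasDerivAt.fun_sum fun ν _ => ((hαd ν).fun_pow 2).const_mul _))
  have hUd : HasDerivAt (fun s => U (q s, s)) (fderiv ℝ U (q t, t) (qdot q t, 1)) t := by
    have hp : HasDerivAt (fun s => ((q s, s) : (Fin (m+k) → ℝ) × ℝ)) ((qdot q t, 1)) t :=
      hqdot.prodMk (hasDerivAt_id t)
    have h := HasFDerivAt.comp_hasDerivAt (f := fun s => ((q s, s) : (Fin (m+k) → ℝ) × ℝ))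
      t (((hU.differentiable (by norm_num)) (q t, t)).hasFDerivAt) hp
    exact h
  rw [(hT.fun_sub hUd).deriv, fderiv_pair_expand U (q t, t) (qdot q t) 1]
  have hsplit : ∑ i : Fin (m+k), qdot q t i * pUq U i (q t, t)
      = ∑ r : Fin m, vel m k q t r * pUq U (Fin.castAdd k r) (q t, t)
        + ∑ ν : Fin k, α ν (along m k q t) * pUq U (Fin.natAdd m ν) (q t, t) := by
    rw [Fin.sum_univ_add]
    congr 1
    exact Finset.sum_congr rfl fun ν _ => by rw [hcon t ν]
  have hbar : ∀ ν, ∑ r : Fin m, vel m k q t r * pv (α ν) r (along m k q t)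
      = α ν (along m k q t) := fun ν => habar ν (along m k q t)
  have key : ∑ r : Fin m, vel m k q t r *
        (M (Fin.castAdd k r) * deriv (fun s => qdot q s (Fin.castAdd k r)) t)
      + ∑ ν : Fin k, M (Fin.natAdd m ν) * α ν (along m k q t)
          * deriv (fun s => α ν (along m k q s)) t
      = ∑ r : Fin m, vel m k q t r * pUq U (Fin.castAdd k r) (q t, t)
        + ∑ ν : Fin k, α ν (along m k q t) * pUq U (Fin.natAdd m ν) (q t, t) := by
    have h1 : ∀ r : Fin m,
        vel m k q t r * (M (Fin.castAdd k r) * deriv (fun s => qdot q s (Fin.castAdd k r)) t)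
          + ∑ ν : Fin k, vel m k q t r * (M (Fin.natAdd m ν) * pv (α ν) r (along m k q t)
              * deriv (fun s => α ν (along m k q s)) t)
        = vel m k q t r * pUq U (Fin.castAdd k r) (q t, t)
          + ∑ ν : Fin k, vel m k q t r *
              (pv (α ν) r (along m k q t) * pUq U (Fin.natAdd m ν) (q t, t)) := by
      intro r
      have := congrArg (fun z => vel m k q t r * z) (hred r t)
      simpa [mul_add, Finset.mul_sum] using this
    have h2 := Finset.sum_congr rfl fun r (_ : r ∈ (Finset.univ : Finset (Fin m))) => h1 r
    rw [Finset.sum_add_distrib, Finset.sum_add_distrib] at h2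
    have hB : ∑ r : Fin m, ∑ ν : Fin k, vel m k q t r * (M (Fin.natAdd m ν)
          * pv (α ν) r (along m k q t) * deriv (fun s => α ν (along m k q s)) t)
        = ∑ ν : Fin k, M (Fin.natAdd m ν) * α ν (along m k q t)
            * deriv (fun s => α ν (along m k q s)) t := by
      rw [Finset.sum_comm]
      refine Finset.sum_congr rfl fun ν _ => ?_
      calc ∑ r : Fin m, vel m k q t r * (M (Fin.natAdd m ν) * pv (α ν) r (along m k q t)
              * deriv (fun s => α ν (along m k q s)) t)
          = (∑ r : Fin m, vel m k q t r * pv (α ν) r (along m k q t))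
              * (M (Fin.natAdd m ν) * deriv (fun s => α ν (along m k q s)) t) := by
            rw [Finset.sum_mul]; exact Finset.sum_congr rfl fun r _ => by ring
        _ = M (Fin.natAdd m ν) * α ν (along m k q t)
              * deriv (fun s => α ν (along m k q s)) t := by rw [hbar ν]; ring
    have hD : ∑ r : Fin m, ∑ ν : Fin k, vel m k q t r *
          (pv (α ν) r (along m k q t) * pUq U (Fin.natAdd m ν) (q t, t))
        = ∑ ν : Fin k, α ν (along m k q t) * pUq U (Fin.natAdd m ν) (q t, t) := by
      rw [Finset.sum_comm]
      refine Finset.sum_congr rfl fun ν _ => ?_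
      calc ∑ r : Fin m, vel m k q t r *
              (pv (α ν) r (along m k q t) * pUq U (Fin.natAdd m ν) (q t, t))
          = (∑ r : Fin m, vel m k q t r * pv (α ν) r (along m k q t))
              * pUq U (Fin.natAdd m ν) (q t, t) := by
            rw [Finset.sum_mul]; exact Finset.sum_congr rfl fun r _ => by ring
        _ = α ν (along m k q t) * pUq U (Fin.natAdd m ν) (q t, t) := by rw [hbar ν]
    rw [hB, hD] at h2
    exact h2
  have e1 : (1/2:ℝ) * ∑ r : Fin m, M (Fin.castAdd k r) *
        (((2:ℕ):ℝ) * (vel m k q t r) ^ 1 * deriv (fun s => qdot q s (Fin.castAdd k r)) t)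
      = ∑ r : Fin m, vel m k q t r *
          (M (Fin.castAdd k r) * deriv (fun s => qdot q s (Fin.castAdd k r)) t) := by
    rw [Finset.mul_sum]; exact Finset.sum_congr rfl fun r _ => by push_cast; ring
  have e2 : (1/2:ℝ) * ∑ ν : Fin k, M (Fin.natAdd m ν) *
        (((2:ℕ):ℝ) * (α ν (along m k q t)) ^ 1 * deriv (fun s => α ν (along m k q s)) t)
      = ∑ ν : Fin k, M (Fin.natAdd m ν) * α ν (along m k q t)
          * deriv (fun s => α ν (along m k q s)) t := by
    rw [Finset.mul_sum]; exact Finset.sum_congr rfl fun ν _ => by push_cast; ring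
  rw [e1, e2, hsplit, key]
  ring


end NH
end
end

section
/- (Čaplygin-type reduction.) Assume the Lagrangian L and the constraint functions α_ν do not depend on t nor on the coordinates q_{m+1},…,q_n: L = L(q₁,…,qₘ, u) and α_ν = α_ν(q₁,…,qₘ, v). Then a C² curve q : ℝ → ℝⁿ satisfying the constraints solves the Voronec equations if and only if for every r = 1,…,m, along the curve: d/dt[∂L*/∂v_r] − ∂L*/∂q_r − ∑_{ν=1}^k (d/dt[∂α_ν/∂v_r] − ∂α_ν/∂q_r)·(∂L/∂u_{m+ν})(q, û) = 0, where L*(q,v) = L(q, û(q,v)). -/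
open scoped BigOperators
noncomputable section
namespace NH

variable {m k : ℕ}

/-- If `f` is differentiable at `x` and invariant along direction `w`, its directional
derivative in direction `w` vanishes. -/
lemma fderiv_dir_eq_zero_of_invariant {E : Type*} [NormedAddCommGroup E] [NormedSpace ℝ E]
    {f : E → ℝ} {x : E} (hd : DifferentiableAt ℝ f x) (w : E)
    (h : ∀ s : ℝ, f (x + s • w) = f x) : fderiv ℝ f x w = 0 := by
  have hg : HasDerivAt (fun s : ℝ => x + s • w) w 0 := by
    simpa using (((hasDerivAt_id (0:ℝ)).smul_const w).const_add x)
  have hd' : HasFDerivAt f (fderiv ℝ f x) (x + (0:ℝ) • w) := by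
    simpa using hd.hasFDerivAt
  have h1 : HasDerivAt (fun s : ℝ => f (x + s • w)) (fderiv ℝ f x w) 0 :=
    hd'.comp_hasDerivAt 0 hg
  have h2 : HasDerivAt (fun s : ℝ => f (x + s • w)) 0 0 := by
    have : (fun s : ℝ => f (x + s • w)) = fun _ => f x := funext h
    rw [this]; exact hasDerivAt_const _ _
  exact h1.unique h2

lemma castAdd_ne_natAdd {m k : ℕ} (r : Fin m) (i : Fin k) :
    Fin.castAdd k r ≠ Fin.natAdd m i := by
  intro h
  have h' := congrArg Fin.val h
  simp [Fin.castAdd, Fin.natAdd] at h'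
  omega

theorem chaplygin_reduction (m k : ℕ) (hm : 0 < m) (hk : 0 < k)
    (L : PtL m k → ℝ) (hL : ContDiff ℝ 2 L)
    (α : Fin k → Pt m k → ℝ) (hα : ∀ ν, ContDiff ℝ 2 (α ν))
    (hLind : ∀ (x x' : Fin (m+k) → ℝ) (u : Fin (m+k) → ℝ) (t t' : ℝ),
      (∀ r : Fin m, x (Fin.castAdd k r) = x' (Fin.castAdd k r)) → L (x, u, t) = L (x', u, t'))
    (hαind : ∀ (ν : Fin k) (x x' : Fin (m+k) → ℝ) (v : Fin m → ℝ) (t t' : ℝ),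
      (∀ r : Fin m, x (Fin.castAdd k r) = x' (Fin.castAdd k r)) → α ν (x, v, t) = α ν (x', v, t'))
    (q : ℝ → Fin (m+k) → ℝ) (hq : ContDiff ℝ 2 q)
    (hcon : Constrained α q)
 :
    Voronec L α q
    ↔ (∀ (r : Fin m) (t : ℝ),
        deriv (fun s => pv (Lstar L α) r (along m k q s)) t
          - pq (Lstar L α) (Fin.castAdd k r) (along m k q t)
          - ∑ ν : Fin k,
              (deriv (fun s => pv (α ν) r (along m k q s)) t
                 - pq (α ν) (Fin.castAdd k r) (along m k q t))
                * pv L (Fin.natAdd m ν) (Lpt α (along m k q t)) = 0) := by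
  -- invariance of α under translation of the q_{m+i} coordinates
  have hαinv : ∀ (ν : Fin k) (i : Fin k) (xq : Fin (m+k) → ℝ) (xv : Fin m → ℝ) (xt s : ℝ),
      α ν (xq + s • (Pi.single (Fin.natAdd m i) 1 : Fin (m+k) → ℝ), xv, xt) = α ν (xq, xv, xt) := by
    intro ν i xq xv xt s
    refine hαind ν _ xq xv xt xt fun r => ?_
    simp [Pi.single_eq_of_ne (castAdd_ne_natAdd r i)]
  -- partials of α in the dependent-coordinate directions vanish
  have hzero1 : ∀ (ν : Fin k) (i : Fin k) (x : Pt m k),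
      pq (α ν) (Fin.natAdd m i) x = 0 := by
    intro ν i x
    obtain ⟨xq, xv, xt⟩ := x
    refine fderiv_dir_eq_zero_of_invariant
      (((hα ν).differentiable (by norm_num)).differentiableAt) _ fun s => ?_
    show α ν ((xq, xv, xt) + (s • (Pi.single (Fin.natAdd m i) 1 : Fin (m+k) → ℝ), s • (0 : Fin m → ℝ), s • (0:ℝ))) = _
    simp only [Prod.mk_add_mk, smul_zero, add_zero]
    exact hαinv ν i xq xv xt s
  -- invariance of Lstar
  have hLsinv : ∀ (i : Fin k) (xq : Fin (m+k) → ℝ) (xv : Fin m → ℝ) (xt s : ℝ),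
      Lstar L α (xq + s • (Pi.single (Fin.natAdd m i) 1 : Fin (m+k) → ℝ), xv, xt) = Lstar L α (xq, xv, xt) := by
    intro i xq xv xt s
    unfold Lstar Lpt
    have huh : uhat α (xq + s • (Pi.single (Fin.natAdd m i) 1 : Fin (m+k) → ℝ), xv, xt) = uhat α (xq, xv, xt) := by
      unfold uhat
      have : (fun ν : Fin k =>
          α ν (xq + s • (Pi.single (Fin.natAdd m i) 1 : Fin (m+k) → ℝ), xv, xt))
          = fun ν : Fin k => α ν (xq, xv, xt) :=
        funext fun ν => hαinv ν i xq xv xt s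
      rw [this]
    rw [huh]
    refine hLind _ xq _ xt xt fun r => ?_
    simp [Pi.single_eq_of_ne (castAdd_ne_natAdd r i)]
  -- smoothness of Lstar
  have huhat : ∀ i : Fin (m+k), ContDiff ℝ 2 (fun x : Pt m k => uhat α x i) := by
    intro i
    refine Fin.addCases (motive := fun i => ContDiff ℝ 2 (fun x : Pt m k => uhat α x i))
      (fun r => ?_) (fun ν => ?_) i
    · simp only [uhat, Fin.append_left]
      exact (contDiff_pi.mp (contDiff_fst.comp contDiff_snd)) r
    · simp only [uhat, Fin.append_right]
      exact hα ν
  have hLpt : ContDiff ℝ 2 (Lpt α) := by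
    unfold Lpt
    refine ContDiff.prodMk contDiff_fst (ContDiff.prodMk ?_ ?_)
    · exact contDiff_pi.mpr huhat
    · exact ContDiff.comp contDiff_snd contDiff_snd
  have hLstar : ContDiff ℝ 2 (Lstar L α) := hL.comp hLpt
  have hzero2 : ∀ (i : Fin k) (x : Pt m k),
      pq (Lstar L α) (Fin.natAdd m i) x = 0 := by
    intro i x
    obtain ⟨xq, xv, xt⟩ := x
    refine fderiv_dir_eq_zero_of_invariant
      ((hLstar.differentiable (by norm_num)).differentiableAt) _ fun s => ?_
    show Lstar L α ((xq, xv, xt) + (s • (Pi.single (Fin.natAdd m i) 1 : Fin (m+k) → ℝ), s • (0 : Fin m → ℝ), s • (0:ℝ))) = _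
    simp only [Prod.mk_add_mk, smul_zero, add_zero]
    exact hLsinv i xq xv xt s
  -- the Voronec expression reduces
  have hB : ∀ (r : Fin m) (ν : Fin k) (t : ℝ),
      Bco α q r ν t = deriv (fun s => pv (α ν) r (along m k q s)) t
        - pq (α ν) (Fin.castAdd k r) (along m k q t) := by
    intro r ν t
    unfold Bco
    simp [hzero1]
  have main : ∀ (r : Fin m) (t : ℝ),
      deriv (fun s => pv (Lstar L α) r (along m k q s)) t
        - pq (Lstar L α) (Fin.castAdd k r) (along m k q t)
        - ∑ ν : Fin k, pq (Lstar L α) (Fin.natAdd m ν) (along m k q t) * pv (α ν) r (along m k q t)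
        - ∑ ν : Fin k, Bco α q r ν t * pv L (Fin.natAdd m ν) (Lpt α (along m k q t))
      = deriv (fun s => pv (Lstar L α) r (along m k q s)) t
          - pq (Lstar L α) (Fin.castAdd k r) (along m k q t)
          - ∑ ν : Fin k,
              (deriv (fun s => pv (α ν) r (along m k q s)) t
                 - pq (α ν) (Fin.castAdd k r) (along m k q t))
                * pv L (Fin.natAdd m ν) (Lpt α (along m k q t)) := by
    intro r t
    have h1 : ∑ ν : Fin k, pq (Lstar L α) (Fin.natAdd m ν) (along m k q t)
        * pv (α ν) r (along m k q t) = 0 := by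
      simp [hzero2]
    rw [h1, sub_zero]
    congr 1
    refine Finset.sum_congr rfl fun ν _ => ?_
    rw [hB]
  unfold Voronec
  constructor
  · intro h r t
    rw [← main r t]
    exact h r t
  · intro h r t
    rw [main r t]
    exact h r t

end NH
end
end

section
/- Let q : ℝ → ℝⁿ be a C² curve satisfying the constraints, let φ_ν : ℝⁿ × ℝⁿ × ℝ → ℝ (ν = 1,…,k) be C¹ with the relations (∂φ_ν/∂u_r)(q,û,t) + ∑_{μ=1}^k (∂φ_ν/∂u_{m+μ})(q,û,t)·(∂α_μ/∂v_r)(q,v,t) = 0 holding along the curve for all ν, r, and let λ₁,…,λ_k : ℝ → ℝ be such that the Lagrange equations with multipliers hold along the curve: for each i = 1,…,n, d/dt[(∂L/∂u_i)(q,û,t)] − (∂L/∂q_i)(q,û,t) = ∑_{ν=1}^k λ_ν (∂φ_ν/∂u_i)(q,û,t). Then at every time t: d/dt[∑_{i=1}^n q̇_i (∂L/∂u_i)(q,û,t) − L(q,û,t)] = −(∂L/∂t)(q,û,t) − ∑_{ν=1}^k (ᾱ_ν − α_ν)(q,v,t)·(d/dt[(∂L/∂u_{m+ν})(q,û,t)]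 − (∂L/∂q_{m+ν})(q,û,t)). -/
open scoped BigOperators
noncomputable section
namespace NH

variable {m k : ℕ}

section EnergyAux

variable {m k : ℕ}

lemma vec_decomp {n m' : ℕ} (w : Fin n → ℝ) (z : Fin m' → ℝ) (τ : ℝ) :
    ((w, z, τ) : (Fin n → ℝ) × (Fin m' → ℝ) × ℝ)
      = (∑ i : Fin n, w i • (((Pi.single i 1 : Fin n → ℝ), 0, 0) : (Fin n → ℝ) × (Fin m' → ℝ) × ℝ))
        + (∑ j : Fin m', z j • (((0:Fin n → ℝ), Pi.single j 1, 0) : (Fin n → ℝ) × (Fin m' → ℝ) × ℝ))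
        + τ • (((0:Fin n → ℝ), 0, 1) : (Fin n → ℝ) × (Fin m' → ℝ) × ℝ) := by
  simp only [Prod.smul_mk, smul_zero, Prod.ext_iff, Prod.fst_sum, Prod.snd_sum,
    Prod.fst_add, Prod.snd_add, smul_eq_mul, mul_one, mul_zero]
  refine ⟨?_, ?_, ?_⟩
  · simp [← Pi.single_smul, smul_eq_mul, Finset.univ_sum_single]
  · simp [← Pi.single_smul, smul_eq_mul, Finset.univ_sum_single]
  · simp

lemma fderiv_apply_decomp {n m' : ℕ} (f : (Fin n → ℝ) × (Fin m' → ℝ) × ℝ → ℝ)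
    (x : (Fin n → ℝ) × (Fin m' → ℝ) × ℝ) (w : Fin n → ℝ) (z : Fin m' → ℝ) (τ : ℝ) :
    fderiv ℝ f x (w, z, τ)
      = ∑ i : Fin n, w i * pq f i x + ∑ j : Fin m', z j * pv f j x + τ * pt f x := by
  rw [vec_decomp w z τ, map_add, map_add, map_sum, map_sum, map_smul]
  simp only [map_smul, smul_eq_mul]
  rfl

lemma two_eq' : (2 : WithTop ℕ∞) = 1 + 1 := by norm_num

lemma deriv_contDiff' {n : ℕ} {q : ℝ → Fin n → ℝ} (hq : ContDiff ℝ 2 q) :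
    ContDiff ℝ 1 (deriv q) :=
  (contDiff_succ_iff_deriv.mp (two_eq' ▸ hq)).2.2

lemma qdot_eq' {n : ℕ} {q : ℝ → Fin n → ℝ} (hq : ContDiff ℝ 2 q) (s : ℝ) (i : Fin n) :
    qdot q s i = deriv q s i := by
  have h : HasDerivAt q (deriv q s) s :=
    ((hq.differentiable (by norm_num)) s).hasDerivAt
  have h2 : HasDerivAt (fun u => q u i) (deriv q s i) s := by
    have := (ContinuousLinearMap.proj (R := ℝ) (φ := fun _ : Fin n => ℝ)
      i).hasFDerivAt.comp_hasDerivAt s h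
    exact this
  exact h2.deriv

lemma curve_contDiff' {n : ℕ} {q : ℝ → Fin n → ℝ} (hq : ContDiff ℝ 2 q) :
    ContDiff ℝ 1 (fun s => ((q s, deriv q s, s) : (Fin n → ℝ) × (Fin n → ℝ) × ℝ)) :=
  ContDiff.prodMk (hq.of_le (by norm_num)) ((deriv_contDiff' hq).prodMk contDiff_id)

lemma curve_hasDerivAt' {n : ℕ} {q : ℝ → Fin n → ℝ} (hq : ContDiff ℝ 2 q) (t : ℝ) :
    HasDerivAt (fun s => ((q s, deriv q s, s) : (Fin n → ℝ) × (Fin n → ℝ) × ℝ))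
      (deriv q t, deriv (deriv q) t, 1) t := by
  have h1 : HasDerivAt q (deriv q t) t := ((hq.differentiable (by norm_num)) t).hasDerivAt
  have h2 : HasDerivAt (deriv q) (deriv (deriv q) t) t :=
    (((deriv_contDiff' hq).differentiable one_ne_zero) t).hasDerivAt
  exact HasDerivAt.prodMk h1 (HasDerivAt.prodMk h2 (hasDerivAt_id t))

lemma comp_curve_hasDerivAt' {n : ℕ} (f : (Fin n → ℝ) × (Fin n → ℝ) × ℝ → ℝ)
    (hf : ContDiff ℝ 1 f) {q : ℝ → Fin n → ℝ} (hq : ContDiff ℝ 2 q) (t : ℝ) :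
    HasDerivAt (fun s => f (q s, deriv q s, s))
      (∑ i : Fin n, deriv q t i * pq f i (q t, deriv q t, t)
        + ∑ i : Fin n, deriv (deriv q) t i * pv f i (q t, deriv q t, t)
        + pt f (q t, deriv q t, t)) t := by
  have h := ((hf.differentiable one_ne_zero) _).hasFDerivAt.comp_hasDerivAt t (curve_hasDerivAt' hq t)
  rw [show (fderiv ℝ f (q t, deriv q t, t)) (deriv q t, deriv (deriv q) t, 1)
      = _ from fderiv_apply_decomp f _ _ _ _] at h
  rw [one_mul] at h
  exact h

lemma pv_comp_contDiff' {n : ℕ} (f : (Fin n → ℝ) × (Fin n → ℝ) × ℝ → ℝ)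
    (hf : ContDiff ℝ 2 f) {q : ℝ → Fin n → ℝ} (hq : ContDiff ℝ 2 q) (j : Fin n) :
    ContDiff ℝ 1 (fun s => pv f j (q s, deriv q s, s)) := by
  have h1 : ContDiff ℝ 1 (fderiv ℝ f) := hf.fderiv_right (by norm_num)
  exact ((ContinuousLinearMap.apply ℝ ℝ
      ((0, Pi.single j 1, 0) : (Fin n → ℝ) × (Fin n → ℝ) × ℝ)).contDiff.comp h1).comp
      (curve_contDiff' hq)

lemma lpt_eq' {m k : ℕ} (α : Fin k → Pt m k → ℝ) {q : ℝ → Fin (m+k) → ℝ}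
    (hq : ContDiff ℝ 2 q) (hcon : Constrained α q) (s : ℝ) :
    Lpt α (along m k q s) = (q s, deriv q s, s) := by
  refine Prod.ext rfl (Prod.ext ?_ rfl)
  show uhat α (along m k q s) = deriv q s
  funext i
  refine Fin.addCases (fun r => ?_) (fun ν => ?_) i
  · show Fin.append (vel m k q s) _ (Fin.castAdd k r) = _
    rw [Fin.append_left]
    exact qdot_eq' hq s (Fin.castAdd k r)
  · show Fin.append (vel m k q s) (fun ν => α ν (along m k q s)) (Fin.natAdd m ν) = _
    rw [Fin.append_right, ← hcon s ν]
    exact qdot_eq' hq s (Fin.natAdd m ν)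

end EnergyAux

theorem multiplier_energy_balance (m k : ℕ) (hm : 0 < m) (hk : 0 < k)
    (L : PtL m k → ℝ) (hL : ContDiff ℝ 2 L)
    (α : Fin k → Pt m k → ℝ) (hα : ∀ ν, ContDiff ℝ 2 (α ν))
    (q : ℝ → Fin (m+k) → ℝ) (hq : ContDiff ℝ 2 q)
    (hcon : Constrained α q)
    (φ : Fin k → PtL m k → ℝ) (hφ : ∀ ν, ContDiff ℝ 1 (φ ν))
    (hrel : ∀ (t : ℝ) (ν : Fin k) (r : Fin m),
      pv (φ ν) (Fin.castAdd k r) (Lpt α (along m k q t))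
        + ∑ μ : Fin k, pv (φ ν) (Fin.natAdd m μ) (Lpt α (along m k q t))
            * pv (α μ) r (along m k q t) = 0)
    (lam : Fin k → ℝ → ℝ)
    (hEL : ∀ (i : Fin (m+k)) (t : ℝ),
      deriv (fun s => pv L i (Lpt α (along m k q s))) t
        - pq L i (Lpt α (along m k q t))
        = ∑ ν : Fin k, lam ν t * pv (φ ν) i (Lpt α (along m k q t))) :
    ∀ t : ℝ,
      deriv (fun s =>
          ∑ i : Fin (m+k), qdot q s i * pv L i (Lpt α (along m k q s))
            - L (Lpt α (along m k q s))) t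
        = - pt L (Lpt α (along m k q t))
          - ∑ ν : Fin k,
              (abar α ν (along m k q t) - α ν (along m k q t))
                * (deriv (fun s => pv L (Fin.natAdd m ν) (Lpt α (along m k q s))) t
                   - pq L (Fin.natAdd m ν) (Lpt α (along m k q t))) := by
  intro t
  have hqd : ∀ (s : ℝ) (i : Fin (m+k)), qdot q s i = deriv q s i := fun s i => qdot_eq' hq s i
  have hLpt : ∀ s, Lpt α (along m k q s) = (q s, deriv q s, s) := lpt_eq' α hq hcon
  have hpfun : ∀ i : Fin (m+k), (fun s => pv L i (Lpt α (along m k q s)))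
      = fun s => pv L i (q s, deriv q s, s) := fun i => funext fun s => by rw [hLpt s]
  have hfun : (fun s => ∑ i : Fin (m+k), qdot q s i * pv L i (Lpt α (along m k q s))
        - L (Lpt α (along m k q s)))
      = fun s => (∑ i : Fin (m+k), deriv q s i * pv L i (q s, deriv q s, s))
        - L (q s, deriv q s, s) := by
    funext s
    rw [hLpt s]
    congr 1
    exact Finset.sum_congr rfl fun i _ => by rw [hqd s i]
  have hL1 : ContDiff ℝ 1 L := hL.of_le (by norm_num)
  have hpdiff : ∀ i : Fin (m+k), HasDerivAt (fun s => pv L i (q s, deriv q s, s))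
      (deriv (fun s => pv L i (q s, deriv q s, s)) t) t :=
    fun i => (((pv_comp_contDiff' L hL hq i).differentiable one_ne_zero) t).hasDerivAt
  have hdq : ∀ i : Fin (m+k), HasDerivAt (fun s => deriv q s i) (deriv (deriv q) t i) t := by
    intro i
    have h2 : HasDerivAt (deriv q) (deriv (deriv q) t) t :=
      (((deriv_contDiff' hq).differentiable one_ne_zero) t).hasDerivAt
    have := (ContinuousLinearMap.proj (R := ℝ) (φ := fun _ : Fin (m+k) => ℝ)
      i).hasFDerivAt.comp_hasDerivAt t h2
    exact this
  have hsum : HasDerivAt (fun s => ∑ i : Fin (m+k), deriv q s i * pv L i (q s, deriv q s, s))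
      (∑ i : Fin (m+k), (deriv (deriv q) t i * pv L i (q t, deriv q t, t)
        + deriv q t i * deriv (fun s => pv L i (q s, deriv q s, s)) t)) t :=
    HasDerivAt.fun_sum fun i _ => (hdq i).mul (hpdiff i)
  have hE := (hsum.fun_sub (comp_curve_hasDerivAt' L hL1 hq t)).deriv
  rw [hfun, hE]
  simp only [hLpt t, hpfun]
  -- notation
  set x := along m k q t with hx
  set y : PtL m k := (q t, deriv q t, t) with hy
  set d : Fin (m+k) → ℝ := deriv q t with hd
  set dd : Fin (m+k) → ℝ := deriv (deriv q) t with hdd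
  set P : Fin (m+k) → ℝ := fun i => deriv (fun s => pv L i (q s, deriv q s, s)) t with hP
  have hEL' : ∀ i : Fin (m+k),
      P i - pq L i y = ∑ ν : Fin k, lam ν t * pv (φ ν) i y := by
    intro i
    have h := hEL i t
    rw [hpfun i, hLpt t] at h
    exact h
  have key : ∀ ν : Fin k,
      ∑ i : Fin (m+k), d i * pv (φ ν) i y
        = ∑ μ : Fin k, (α μ x - abar α μ x) * pv (φ ν) (Fin.natAdd m μ) y := by
    intro ν
    have hrel' : ∀ r : Fin m, pv (φ ν) (Fin.castAdd k r) y
        = - ∑ μ : Fin k, pv (φ ν) (Fin.natAdd m μ) y * pv (α μ) r x := by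
      intro r
      have h := hrel t ν r
      rw [hLpt t] at h
      linarith [h]
    have h1 : ∑ r : Fin m, d (Fin.castAdd k r) * pv (φ ν) (Fin.castAdd k r) y
        = ∑ μ : Fin k, -(abar α μ x * pv (φ ν) (Fin.natAdd m μ) y) := by
      have e1 : ∀ r : Fin m, d (Fin.castAdd k r) * pv (φ ν) (Fin.castAdd k r) y
          = ∑ μ : Fin k, -(x.2.1 r * pv (α μ) r x * pv (φ ν) (Fin.natAdd m μ) y) := by
        intro r
        have hv : d (Fin.castAdd k r) = x.2.1 r := (hqd t (Fin.castAdd k r)).symm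
        rw [hv, hrel' r, mul_neg, Finset.mul_sum, ← Finset.sum_neg_distrib]
        exact Finset.sum_congr rfl fun μ _ => by ring
      calc ∑ r : Fin m, d (Fin.castAdd k r) * pv (φ ν) (Fin.castAdd k r) y
          = ∑ r : Fin m, ∑ μ : Fin k,
              -(x.2.1 r * pv (α μ) r x * pv (φ ν) (Fin.natAdd m μ) y) :=
            Finset.sum_congr rfl fun r _ => e1 r
        _ = ∑ μ : Fin k, ∑ r : Fin m,
              -(x.2.1 r * pv (α μ) r x * pv (φ ν) (Fin.natAdd m μ) y) := Finset.sum_comm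
        _ = ∑ μ : Fin k, -(abar α μ x * pv (φ ν) (Fin.natAdd m μ) y) := by
            refine Finset.sum_congr rfl fun μ _ => ?_
            rw [Finset.sum_neg_distrib, neg_inj]
            simp only [abar, Finset.sum_mul]
    have h2 : ∑ μ : Fin k, d (Fin.natAdd m μ) * pv (φ ν) (Fin.natAdd m μ) y
        = ∑ μ : Fin k, α μ x * pv (φ ν) (Fin.natAdd m μ) y := by
      refine Finset.sum_congr rfl fun μ _ => ?_
      rw [show d (Fin.natAdd m μ) = α μ x from (hqd t (Fin.natAdd m μ)).symm.trans (hcon t μ)]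
    rw [Fin.sum_univ_add (f := fun i => d i * pv (φ ν) i y), h1, h2,
      ← Finset.sum_add_distrib]
    exact Finset.sum_congr rfl fun μ _ => by ring
  have hmain : ∑ i : Fin (m+k), d i * (P i - pq L i y)
      = - ∑ ν : Fin k, (abar α ν x - α ν x)
          * (P (Fin.natAdd m ν) - pq L (Fin.natAdd m ν) y) := by
    calc ∑ i : Fin (m+k), d i * (P i - pq L i y)
        = ∑ i : Fin (m+k), d i * ∑ ν : Fin k, lam ν t * pv (φ ν) i y :=
          Finset.sum_congr rfl fun i _ => by rw [hEL' i]
      _ = ∑ i : Fin (m+k), ∑ ν : Fin k, lam ν t * (d i * pv (φ ν) i y) := by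
          refine Finset.sum_congr rfl fun i _ => ?_
          rw [Finset.mul_sum]
          exact Finset.sum_congr rfl fun ν _ => by ring
      _ = ∑ ν : Fin k, ∑ i : Fin (m+k), lam ν t * (d i * pv (φ ν) i y) := Finset.sum_comm
      _ = ∑ ν : Fin k, lam ν t * ∑ i : Fin (m+k), d i * pv (φ ν) i y := by
          refine Finset.sum_congr rfl fun ν _ => ?_
          rw [Finset.mul_sum]
      _ = ∑ ν : Fin k, lam ν t
            * ∑ μ : Fin k, (α μ x - abar α μ x) * pv (φ ν) (Fin.natAdd m μ) y := by
          refine Finset.sum_congr rfl fun ν _ => ?_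
          rw [key ν]
      _ = ∑ ν : Fin k, ∑ μ : Fin k,
            (α μ x - abar α μ x) * (lam ν t * pv (φ ν) (Fin.natAdd m μ) y) := by
          refine Finset.sum_congr rfl fun ν _ => ?_
          rw [Finset.mul_sum]
          exact Finset.sum_congr rfl fun μ _ => by ring
      _ = ∑ μ : Fin k, ∑ ν : Fin k,
            (α μ x - abar α μ x) * (lam ν t * pv (φ ν) (Fin.natAdd m μ) y) := Finset.sum_comm
      _ = ∑ μ : Fin k, (α μ x - abar α μ x)
            * (P (Fin.natAdd m μ) - pq L (Fin.natAdd m μ) y) := by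
          refine Finset.sum_congr rfl fun μ _ => ?_
          rw [← Finset.mul_sum, ← hEL' (Fin.natAdd m μ)]
      _ = - ∑ ν : Fin k, (abar α ν x - α ν x)
            * (P (Fin.natAdd m ν) - pq L (Fin.natAdd m ν) y) := by
          rw [← Finset.sum_neg_distrib]
          exact Finset.sum_congr rfl fun μ _ => by ring
  have hsplit : ∑ i : Fin (m+k), (dd i * pv L i y + d i * P i)
      = ∑ i : Fin (m+k), dd i * pv L i y + ∑ i : Fin (m+k), d i * P i :=
    Finset.sum_add_distrib
  have hsub : ∑ i : Fin (m+k), d i * (P i - pq L i y)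
      = ∑ i : Fin (m+k), d i * P i - ∑ i : Fin (m+k), d i * pq L i y := by
    rw [← Finset.sum_sub_distrib]
    exact Finset.sum_congr rfl fun i _ => by ring
  linarith [hmain, hsplit, hsub]


end NH
end
end
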